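/- If Γ ⊆ Ω(G) is nonempty and |⋃Γ| + |⋂Γ| = 2α(G), then the induced subgraph G[⋃Γ − ⋂Γ] has a perfect matching. -/

import Mathlib

open Set

variable {V : Type*}

/-- `S` is an independent set of `G`. -/
def IndepSet (G : SimpleGraph V) (S : Set V) : Prop :=
  ∀ x ∈ S, ∀ y ∈ S, ¬ G.Adj x y

/-- The independence number `α(G)`. -/
noncomputable def alpha (G : SimpleGraph V) : ℕ :=
  sSup {n | ∃ S : Set V, IndepSet G S ∧ S.ncard = n}

/-- `S` is a maximum independent set of `G`. -/
def MaxIndep (G : SimpleGraph V) (S : Set V) : Prop :=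
  IndepSet G S ∧ S.ncard = alpha G

/-- `Ω(G)`, the family of all maximum independent sets. -/
def Omega (G : SimpleGraph V) : Set (Set V) := {S | MaxIndep G S}

/-- `core(G)`, the intersection of all maximum independent sets. -/
def core (G : SimpleGraph V) : Set V := ⋂₀ Omega G

/-- `corona(G)`, the union of all maximum independent sets. -/
def corona (G : SimpleGraph V) : Set V := ⋃₀ Omega G

/-- The matching number `μ(G)`. -/
noncomputable def matchNum (G : SimpleGraph V) : ℕ :=
  sSup {n | ∃ M : G.Subgraph, M.IsMatching ∧ M.edgeSet.ncard = n}

/-- A matching from `X` into `Y`: an injection `f` on `X` into `Y` such that each `x ∈ X`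
is adjacent to `f x` and the edges `{x, f x}` are pairwise disjoint. -/
def MatchingFrom (G : SimpleGraph V) (X Y : Set V) : Prop :=
  ∃ f : V → V, Set.InjOn f X ∧ (∀ x ∈ X, f x ∈ Y ∧ G.Adj x (f x)) ∧
    ∀ x ∈ X, ∀ y ∈ X, x ≠ y → f x ≠ y

private lemma indep_le_alpha [Fintype V] (G : SimpleGraph V) {S : Set V}
    (hS : IndepSet G S) : S.ncard ≤ alpha G := by
  apply le_csSup
  · refine ⟨Fintype.card V, ?_⟩
    rintro n ⟨T, -, rfl⟩
    have := Set.ncard_le_ncard (Set.subset_univ T) Set.finite_univ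
    simpa [Set.ncard_univ] using this
  · exact ⟨S, hS, rfl⟩

private lemma hall_matching [Fintype V] (G : SimpleGraph V) {A B : Set V}
    (hA : MaxIndep G A) (hB : IndepSet G B) :
    ∃ f : V → V, Set.InjOn f (B \ A) ∧ ∀ x ∈ B \ A, f x ∈ A \ B ∧ G.Adj x (f x) := by
  classical
  set t : ↥(B \ A) → Finset V := fun x => A.toFinset.filter (fun y => G.Adj ↑x y) with ht
  have hall : ∀ s : Finset ↥(B \ A), s.card ≤ (s.biUnion t).card := by
    intro s
    by_contra hlt
    push_neg at hlt
    set N : Set V := ↑(s.biUnion t) with hN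
    set W : Set V := Subtype.val '' (↑s : Set ↥(B \ A)) with hW
    have hNA : N ⊆ A := by
      intro y hy
      simp only [hN, Finset.coe_biUnion, Set.mem_iUnion, Finset.mem_coe] at hy
      obtain ⟨x, -, hx⟩ := hy
      simp only [ht, Finset.mem_filter, Set.mem_toFinset] at hx
      exact hx.1
    have hWBA : W ⊆ B \ A := by rintro y ⟨x, -, rfl⟩; exact x.2
    have hindep : IndepSet G ((A \ N) ∪ W) := by
      rintro x hx y hy hadj
      rcases hx with hx | hx <;> rcases hy with hy | hy
      · exact hA.1 x hx.1 y hy.1 hadj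
      · -- x ∈ A \ N, y ∈ W
        obtain ⟨y', hy', rfl⟩ := hy
        have : x ∈ t y' := by
          simp only [ht, Finset.mem_filter, Set.mem_toFinset]
          exact ⟨hx.1, hadj.symm⟩
        exact hx.2 (by
          simp only [hN, Finset.coe_biUnion, Set.mem_iUnion, Finset.mem_coe]
          exact ⟨y', hy', this⟩)
      · obtain ⟨x', hx', rfl⟩ := hx
        have : y ∈ t x' := by
          simp only [ht, Finset.mem_filter, Set.mem_toFinset]
          exact ⟨hy.1, hadj⟩
        exact hy.2 (by
          simp only [hN, Finset.coe_biUnion, Set.mem_iUnion, Finset.mem_coe]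
          exact ⟨x', hx', this⟩)
      · exact hB x (hWBA hx).1 y (hWBA hy).1 hadj
    have hdisj : Disjoint (A \ N) W := by
      rw [Set.disjoint_left]
      rintro x hx hxW
      exact (hWBA hxW).2 hx.1
    have hcard : ((A \ N) ∪ W).ncard = A.ncard - N.ncard + s.card := by
      rw [Set.ncard_union_eq hdisj (Set.toFinite _) (Set.toFinite _),
        Set.ncard_diff hNA (Set.toFinite _)]
      congr 1
      rw [hW, Set.ncard_image_of_injective _ Subtype.val_injective, Set.ncard_coe_finset]
    have hle := indep_le_alpha G hindep
    rw [hcard, ← hA.2] at hle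
    have hNcard : N.ncard = (s.biUnion t).card := by rw [hN, Set.ncard_coe_finset]
    have hNle : N.ncard ≤ A.ncard := Set.ncard_le_ncard hNA (Set.toFinite _)
    omega
  obtain ⟨f, hfinj, hft⟩ := (Finset.all_card_le_biUnion_card_iff_exists_injective t).mp hall
  refine ⟨fun x => if h : x ∈ B \ A then f ⟨x, h⟩ else x, ?_, ?_⟩
  · intro x hx y hy hxy
    simp only [dif_pos hx, dif_pos hy] at hxy
    exact Subtype.ext_iff.mp (hfinj hxy)
  · intro x hx
    simp only [dif_pos hx]
    have := hft ⟨x, hx⟩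
    simp only [ht, Finset.mem_filter, Set.mem_toFinset] at this
    refine ⟨⟨this.1, fun hfB => ?_⟩, this.2⟩
    exact hB x hx.1 _ hfB this.2

private lemma pairing_involution (G : SimpleGraph V) {s t : Set V} (hst : Disjoint s t)
    (f₀ : V → V) (hinj : Set.InjOn f₀ s)
    (hmap : ∀ x ∈ s, f₀ x ∈ t ∧ G.Adj x (f₀ x)) (hsurj : f₀ '' s = t) :
    ∃ g : V → V, ∀ x ∈ s ∪ t, g x ∈ s ∪ t ∧ G.Adj x (g x) ∧ g (g x) = x := by
  classical
  rcases isEmpty_or_nonempty V with hV | hV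
  · exact ⟨id, fun x _ => isEmptyElim x⟩
  set g : V → V := fun x => if x ∈ s then f₀ x else Function.invFunOn f₀ s x with hg
  have hts : ∀ y ∈ t, Function.invFunOn f₀ s y ∈ s ∧ f₀ (Function.invFunOn f₀ s y) = y := by
    intro y hy
    have : y ∈ f₀ '' s := hsurj ▸ hy
    obtain ⟨x, hx, hxy⟩ := this
    exact ⟨Function.invFunOn_mem ⟨x, hx, hxy⟩, Function.invFunOn_eq ⟨x, hx, hxy⟩⟩
  refine ⟨g, fun x hx => ?_⟩
  rcases hx with hx | hx
  · have h1 : g x = f₀ x := if_pos hx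
    have h2 : f₀ x ∈ t := (hmap x hx).1
    have h3 : f₀ x ∉ s := fun h => Set.disjoint_left.mp hst h h2
    have h4 : g (f₀ x) = Function.invFunOn f₀ s (f₀ x) := if_neg h3
    have h5 : Function.invFunOn f₀ s (f₀ x) = x := hinj.leftInvOn_invFunOn hx
    refine ⟨by rw [h1]; exact Or.inr h2, by rw [h1]; exact (hmap x hx).2, ?_⟩
    rw [h1, h4, h5]
  · have hxs : x ∉ s := fun h => Set.disjoint_left.mp hst h hx
    have h1 : g x = Function.invFunOn f₀ s x := if_neg hxs
    obtain ⟨h2, h3⟩ := hts x hx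
    refine ⟨by rw [h1]; exact Or.inl h2, ?_, ?_⟩
    · rw [h1]
      have := (hmap _ h2).2
      rw [h3] at this
      exact this.symm
    · rw [h1, hg]
      simp only [if_pos h2, h3]

private lemma combine_involution (G : SimpleGraph V) {D₁ D₂ : Set V} (hd : Disjoint D₁ D₂)
    (f₁ : V → V) (h₁ : ∀ x ∈ D₁, f₁ x ∈ D₁ ∧ G.Adj x (f₁ x) ∧ f₁ (f₁ x) = x)
    (f₂ : V → V) (h₂ : ∀ x ∈ D₂, f₂ x ∈ D₂ ∧ G.Adj x (f₂ x) ∧ f₂ (f₂ x) = x) :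
    ∃ f : V → V, ∀ x ∈ D₁ ∪ D₂, f x ∈ D₁ ∪ D₂ ∧ G.Adj x (f x) ∧ f (f x) = x := by
  classical
  refine ⟨fun x => if x ∈ D₁ then f₁ x else f₂ x, fun x hx => ?_⟩
  rcases hx with hx | hx
  · obtain ⟨ha, hb, hc⟩ := h₁ x hx
    simp only [if_pos hx, if_pos ha]
    exact ⟨Or.inl ha, hb, hc⟩
  · have hx1 : x ∉ D₁ := fun h => Set.disjoint_left.mp hd h hx
    obtain ⟨ha, hb, hc⟩ := h₂ x hx
    have ha1 : f₂ x ∉ D₁ := fun h => Set.disjoint_left.mp hd h ha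
    simp only [if_neg hx1, if_neg ha1]
    exact ⟨Or.inr ha, hb, hc⟩

private lemma involution_to_pm (G : SimpleGraph V) (D : Set V)
    (f : V → V) (hf : ∀ x ∈ D, f x ∈ D ∧ G.Adj x (f x) ∧ f (f x) = x) :
    ∃ M : (G.induce D).Subgraph, M.IsPerfectMatching := by
  refine ⟨⟨Set.univ, fun a b => f ↑a = ↑b ∧ f ↑b = ↑a, ?_, fun _ => Set.mem_univ _,
    ⟨fun a b hab => ⟨hab.2, hab.1⟩⟩⟩, ?_, fun _ => Set.mem_univ _⟩
  · rintro a b ⟨h1, -⟩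
    simp only [SimpleGraph.comap_adj, Function.Embedding.coe_subtype]
    have := (hf ↑a a.2).2.1
    rwa [h1] at this
  · rintro v -
    refine ⟨⟨f ↑v, (hf ↑v v.2).1⟩, ⟨rfl, (hf ↑v v.2).2.2⟩, ?_⟩
    rintro w ⟨hw, -⟩
    exact Subtype.ext hw.symm

private lemma main_ind [Fintype V] (G : SimpleGraph V) (Γ : Finset (Set V))
    (hne : Γ.Nonempty) (hΓ : (↑Γ : Set (Set V)) ⊆ Omega G) :
    2 * alpha G ≤ (⋃₀ (↑Γ : Set (Set V))).ncard + (⋂₀ (↑Γ : Set (Set V))).ncard ∧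
      ((⋃₀ (↑Γ : Set (Set V))).ncard + (⋂₀ (↑Γ : Set (Set V))).ncard = 2 * alpha G →
        ∃ f : V → V, ∀ x ∈ ⋃₀ (↑Γ : Set (Set V)) \ ⋂₀ (↑Γ : Set (Set V)),
          f x ∈ ⋃₀ (↑Γ : Set (Set V)) \ ⋂₀ (↑Γ : Set (Set V)) ∧ G.Adj x (f x) ∧ f (f x) = x) := by
  classical
  induction hne using Finset.Nonempty.cons_induction with
  | singleton A =>
    have hA : A ∈ Omega G := hΓ (by simp)
    simp only [Finset.coe_singleton, Set.sUnion_singleton, Set.sInter_singleton]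
    refine ⟨by rw [hA.2]; ring_nf; exact le_refl _, fun _ => ⟨id, fun x hx => ?_⟩⟩
    simp at hx
  | cons A Γ' hA' hne' ih =>
    have hcoe : (↑(Finset.cons A Γ' hA') : Set (Set V)) = insert A (↑Γ' : Set (Set V)) := by simp
    rw [hcoe] at hΓ ⊢
    rw [Set.sUnion_insert, Set.sInter_insert]
    set U' : Set V := ⋃₀ (↑Γ' : Set (Set V)) with hU'def
    set I' : Set V := ⋂₀ (↑Γ' : Set (Set V)) with hI'def
    have hAΩ : MaxIndep G A := hΓ (Set.mem_insert _ _)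
    have hΓ'Ω : (↑Γ' : Set (Set V)) ⊆ Omega G := fun S hS => hΓ (Set.mem_insert_of_mem _ hS)
    obtain ⟨ihle, ihmatch⟩ := ih hΓ'Ω
    obtain ⟨S₀, hS₀⟩ := hne'
    have hS₀' : S₀ ∈ (↑Γ' : Set (Set V)) := hS₀
    have hI'U' : I' ⊆ U' := fun x hx => ⟨S₀, hS₀', hx S₀ hS₀'⟩
    have hI'indep : IndepSet G I' := fun x hx y hy =>
      (hΓ'Ω hS₀').1 x (hx S₀ hS₀') y (hy S₀ hS₀')
    obtain ⟨f₀, hinj, hf₀⟩ := hall_matching G hAΩ hI'indep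
    have hmap : ∀ x ∈ I' \ A, f₀ x ∈ A \ U' ∧ G.Adj x (f₀ x) := by
      intro x hx
      obtain ⟨⟨hfA, -⟩, hadj⟩ := hf₀ x hx
      refine ⟨⟨hfA, ?_⟩, hadj⟩
      rintro ⟨S, hS, hfS⟩
      exact (hΓ'Ω hS).1 x (hx.1 S hS) (f₀ x) hfS hadj
    have c1 : (I' \ A).ncard ≤ (A \ U').ncard :=
      Set.ncard_le_ncard_of_injOn f₀ (fun x hx => (hmap x hx).1) hinj (Set.toFinite _)
    have hU : (A ∪ U').ncard = (A \ U').ncard + U'.ncard := by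
      rw [← Set.diff_union_self,
        Set.ncard_union_eq disjoint_sdiff_left (Set.toFinite _) (Set.toFinite _)]
    have hI : (I' ∩ A).ncard + (I' \ A).ncard = I'.ncard :=
      Set.ncard_inter_add_ncard_diff_eq_ncard I' A (Set.toFinite _)
    have hIA : (A ∩ I').ncard = (I' ∩ A).ncard := by rw [Set.inter_comm]
    constructor
    · omega
    · intro heq
      have e1 : (I' \ A).ncard = (A \ U').ncard := by omega
      have e2 : U'.ncard + I'.ncard = 2 * alpha G := by omega
      obtain ⟨f₁, hf₁⟩ := ihmatch e2
      have hsurj : f₀ '' (I' \ A) = A \ U' := by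
        apply Set.eq_of_subset_of_ncard_le
        · rintro y ⟨x, hx, rfl⟩; exact (hmap x hx).1
        · rw [Set.ncard_image_of_injOn hinj]; omega
        · exact Set.toFinite _
      have hdisj1 : Disjoint (I' \ A) (A \ U') :=
        Set.disjoint_left.mpr (fun x hx hx' => hx.2 hx'.1)
      obtain ⟨g, hg⟩ := pairing_involution G hdisj1 f₀ hinj hmap hsurj
      have hdisj2 : Disjoint (U' \ I') ((I' \ A) ∪ (A \ U')) := by
        rw [Set.disjoint_left]
        rintro x hx (hx' | hx')
        · exact hx.2 hx'.1
        · exact hx'.2 hx.1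
      obtain ⟨f, hf⟩ := combine_involution G hdisj2 f₁ hf₁ g hg
      have hsets : (A ∪ U') \ (A ∩ I') = (U' \ I') ∪ ((I' \ A) ∪ (A \ U')) := by
        ext x
        have hiu := @hI'U' x
        simp only [Set.mem_diff, Set.mem_union, Set.mem_inter_iff]
        tauto
      rw [hsets]
      exact ⟨f, hf⟩


theorem stmt_14 [Fintype V] (G : SimpleGraph V)
    (Γ : Set (Set V)) (hΓ : Γ ⊆ Omega G) (hne : Γ.Nonempty)
    (h : (⋃₀ Γ).ncard + (⋂₀ Γ).ncard = 2 * alpha G) :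
    ∃ M : (G.induce (⋃₀ Γ \ ⋂₀ Γ)).Subgraph, M.IsPerfectMatching := by
  classical
  have hfin : Γ.Finite := Set.toFinite Γ
  have hcoe : (↑hfin.toFinset : Set (Set V)) = Γ := hfin.coe_toFinset
  have hne' : hfin.toFinset.Nonempty := by
    rw [← Finset.coe_nonempty, hcoe]; exact hne
  obtain ⟨-, hm⟩ := main_ind G hfin.toFinset hne' (by rw [hcoe]; exact hΓ)
  rw [hcoe] at hm
  obtain ⟨f, hf⟩ := hm h
  exact involution_to_pm G _ f hf
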